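/- Let X, Y₁, Y₂ be finitely-valued random variables and let Ŷ₁, Ŷ₂ be independent erasure versions of Y₁, Y₂ with retention probabilities q₁, q₂ ∈ [0,1] respectively (Ŷᵢ = Yᵢ with probability qᵢ, else a fresh erasure symbol; the two erasure indicators are independent of everything and of each other). Then for any random variable Z, I(X; Ŷ₁, Ŷ₂ | Z) = q₁(1−q₂)·I(X; Y₁ | Z) + (1−q₁)q₂·I(X; Y₂ | Z) + q₁q₂·I(X; Y₁, Y₂ | Z). -/
import Mathlib


open Finset Real

/-- Probability that the random variable `X` takes the value `x`, for a finite
probability space with mass function `p`. -/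
noncomputable def pr {Ω α : Type*} [Fintype Ω] [DecidableEq α]
    (p : Ω → ℝ) (X : Ω → α) (x : α) : ℝ :=
  ∑ ω, if X ω = x then p ω else 0

/-- Conditional Shannon entropy (base 2) `H(X | Z)` on a finite probability space. -/
noncomputable def condEntropy {Ω α β : Type*} [Fintype Ω] [Fintype α] [Fintype β]
    [DecidableEq α] [DecidableEq β] (p : Ω → ℝ) (X : Ω → α) (Z : Ω → β) : ℝ :=
  -∑ x : α, ∑ z : β,
      pr p (fun ω => (X ω, Z ω)) (x, z) *
        Real.logb 2 (pr p (fun ω => (X ω, Z ω)) (x, z) / pr p Z z)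

/-- Conditional mutual information `I(X ; Y | Z) = H(X|Z) - H(X|Z,Y)`. -/
noncomputable def condMI {Ω α β γ : Type*} [Fintype Ω] [Fintype α] [Fintype β] [Fintype γ]
    [DecidableEq α] [DecidableEq β] [DecidableEq γ]
    (p : Ω → ℝ) (X : Ω → α) (Y : Ω → β) (Z : Ω → γ) : ℝ :=
  condEntropy p X Z - condEntropy p X (fun ω => (Z ω, Y ω))

set_option linter.unusedSectionVars false
set_option linter.unnecessarySeqFocus false

section Aux
variable {Ω 𝒳 𝒴₁ 𝒴₂ 𝒵 : Type*} [Fintype Ω] [Fintype 𝒳] [Fintype 𝒴₁] [Fintype 𝒴₂] [Fintype 𝒵]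
  [DecidableEq 𝒳] [DecidableEq 𝒴₁] [DecidableEq 𝒴₂] [DecidableEq 𝒵]
  (p : Ω → ℝ) (q₁ q₂ : ℝ) (X : Ω → 𝒳) (Y₁ : Ω → 𝒴₁) (Y₂ : Ω → 𝒴₂) (Z : Ω → 𝒵)

lemma scale_log (c a b : ℝ) :
    c * a * Real.logb 2 (c * a / (c * b)) = c * (a * Real.logb 2 (a / b)) := by
  rcases eq_or_ne c 0 with h | h
  · simp [h]
  · rw [mul_div_mul_left _ _ h, mul_assoc]

/- Marginal probabilities on the extended space. -/

lemma prM_NN (z : 𝒵) :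
    pr (fun e : Ω × Bool × Bool =>
        p e.1 * (if e.2.1 then q₁ else 1 - q₁) * (if e.2.2 then q₂ else 1 - q₂))
      (fun e => (Z e.1, ((if e.2.1 then some (Y₁ e.1) else none),
                         (if e.2.2 then some (Y₂ e.1) else none))))
      (z, (none, none))
    = (1 - q₁) * (1 - q₂) * pr p Z z := by
  unfold pr
  rw [Finset.mul_sum, Fintype.sum_prod_type]
  refine Finset.sum_congr rfl fun ω _ => ?_
  simp only [Fintype.sum_prod_type, Fintype.sum_bool]
  by_cases h1 : Z ω = z <;> simp [h1, Prod.ext_iff] <;> ring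

lemma prM_BN (z : 𝒵) (y₁ : 𝒴₁) :
    pr (fun e : Ω × Bool × Bool =>
        p e.1 * (if e.2.1 then q₁ else 1 - q₁) * (if e.2.2 then q₂ else 1 - q₂))
      (fun e => (Z e.1, ((if e.2.1 then some (Y₁ e.1) else none),
                         (if e.2.2 then some (Y₂ e.1) else none))))
      (z, (some y₁, none))
    = q₁ * (1 - q₂) * pr p (fun ω => (Z ω, Y₁ ω)) (z, y₁) := by
  unfold pr
  rw [Finset.mul_sum, Fintype.sum_prod_type]
  refine Finset.sum_congr rfl fun ω _ => ?_
  simp only [Fintype.sum_prod_type, Fintype.sum_bool]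
  by_cases h1 : Z ω = z <;> by_cases h2 : Y₁ ω = y₁ <;>
    simp [h1, h2, Prod.ext_iff] <;> ring

lemma prM_NC (z : 𝒵) (y₂ : 𝒴₂) :
    pr (fun e : Ω × Bool × Bool =>
        p e.1 * (if e.2.1 then q₁ else 1 - q₁) * (if e.2.2 then q₂ else 1 - q₂))
      (fun e => (Z e.1, ((if e.2.1 then some (Y₁ e.1) else none),
                         (if e.2.2 then some (Y₂ e.1) else none))))
      (z, (none, some y₂))
    = (1 - q₁) * q₂ * pr p (fun ω => (Z ω, Y₂ ω)) (z, y₂) := by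
  unfold pr
  rw [Finset.mul_sum, Fintype.sum_prod_type]
  refine Finset.sum_congr rfl fun ω _ => ?_
  simp only [Fintype.sum_prod_type, Fintype.sum_bool]
  by_cases h1 : Z ω = z <;> by_cases h2 : Y₂ ω = y₂ <;>
    simp [h1, h2, Prod.ext_iff] <;> ring

lemma prM_SS (z : 𝒵) (y₁ : 𝒴₁) (y₂ : 𝒴₂) :
    pr (fun e : Ω × Bool × Bool =>
        p e.1 * (if e.2.1 then q₁ else 1 - q₁) * (if e.2.2 then q₂ else 1 - q₂))
      (fun e => (Z e.1, ((if e.2.1 then some (Y₁ e.1) else none),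
                         (if e.2.2 then some (Y₂ e.1) else none))))
      (z, (some y₁, some y₂))
    = q₁ * q₂ * pr p (fun ω => (Z ω, Y₁ ω, Y₂ ω)) (z, y₁, y₂) := by
  unfold pr
  rw [Finset.mul_sum, Fintype.sum_prod_type]
  refine Finset.sum_congr rfl fun ω _ => ?_
  simp only [Fintype.sum_prod_type, Fintype.sum_bool]
  by_cases h1 : Z ω = z <;> by_cases h2 : Y₁ ω = y₁ <;> by_cases h3 : Y₂ ω = y₂ <;>
    simp [h1, h2, h3, Prod.ext_iff] <;> ring

/- Joint probabilities on the extended space. -/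

lemma prJ_NN (x : 𝒳) (z : 𝒵) :
    pr (fun e : Ω × Bool × Bool =>
        p e.1 * (if e.2.1 then q₁ else 1 - q₁) * (if e.2.2 then q₂ else 1 - q₂))
      (fun e => (X e.1, (Z e.1, ((if e.2.1 then some (Y₁ e.1) else none),
                                 (if e.2.2 then some (Y₂ e.1) else none)))))
      (x, (z, (none, none)))
    = (1 - q₁) * (1 - q₂) * pr p (fun ω => (X ω, Z ω)) (x, z) := by
  unfold pr
  rw [Finset.mul_sum, Fintype.sum_prod_type]
  refine Finset.sum_congr rfl fun ω _ => ?_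
  simp only [Fintype.sum_prod_type, Fintype.sum_bool]
  by_cases h0 : X ω = x <;> by_cases h1 : Z ω = z <;>
    simp [h0, h1, Prod.ext_iff] <;> ring

lemma prJ_BN (x : 𝒳) (z : 𝒵) (y₁ : 𝒴₁) :
    pr (fun e : Ω × Bool × Bool =>
        p e.1 * (if e.2.1 then q₁ else 1 - q₁) * (if e.2.2 then q₂ else 1 - q₂))
      (fun e => (X e.1, (Z e.1, ((if e.2.1 then some (Y₁ e.1) else none),
                                 (if e.2.2 then some (Y₂ e.1) else none)))))
      (x, (z, (some y₁, none)))
    = q₁ * (1 - q₂) * pr p (fun ω => (X ω, (Z ω, Y₁ ω))) (x, (z, y₁)) := by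
  unfold pr
  rw [Finset.mul_sum, Fintype.sum_prod_type]
  refine Finset.sum_congr rfl fun ω _ => ?_
  simp only [Fintype.sum_prod_type, Fintype.sum_bool]
  by_cases h0 : X ω = x <;> by_cases h1 : Z ω = z <;> by_cases h2 : Y₁ ω = y₁ <;>
    simp [h0, h1, h2, Prod.ext_iff] <;> ring

lemma prJ_NC (x : 𝒳) (z : 𝒵) (y₂ : 𝒴₂) :
    pr (fun e : Ω × Bool × Bool =>
        p e.1 * (if e.2.1 then q₁ else 1 - q₁) * (if e.2.2 then q₂ else 1 - q₂))
      (fun e => (X e.1, (Z e.1, ((if e.2.1 then some (Y₁ e.1) else none),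
                                 (if e.2.2 then some (Y₂ e.1) else none)))))
      (x, (z, (none, some y₂)))
    = (1 - q₁) * q₂ * pr p (fun ω => (X ω, (Z ω, Y₂ ω))) (x, (z, y₂)) := by
  unfold pr
  rw [Finset.mul_sum, Fintype.sum_prod_type]
  refine Finset.sum_congr rfl fun ω _ => ?_
  simp only [Fintype.sum_prod_type, Fintype.sum_bool]
  by_cases h0 : X ω = x <;> by_cases h1 : Z ω = z <;> by_cases h2 : Y₂ ω = y₂ <;>
    simp [h0, h1, h2, Prod.ext_iff] <;> ring

lemma prJ_SS (x : 𝒳) (z : 𝒵) (y₁ : 𝒴₁) (y₂ : 𝒴₂) :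
    pr (fun e : Ω × Bool × Bool =>
        p e.1 * (if e.2.1 then q₁ else 1 - q₁) * (if e.2.2 then q₂ else 1 - q₂))
      (fun e => (X e.1, (Z e.1, ((if e.2.1 then some (Y₁ e.1) else none),
                                 (if e.2.2 then some (Y₂ e.1) else none)))))
      (x, (z, (some y₁, some y₂)))
    = q₁ * q₂ * pr p (fun ω => (X ω, (Z ω, Y₁ ω, Y₂ ω))) (x, (z, y₁, y₂)) := by
  unfold pr
  rw [Finset.mul_sum, Fintype.sum_prod_type]
  refine Finset.sum_congr rfl fun ω _ => ?_
  simp only [Fintype.sum_prod_type, Fintype.sum_bool]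
  by_cases h0 : X ω = x <;> by_cases h1 : Z ω = z <;> by_cases h2 : Y₁ ω = y₁ <;>
    by_cases h3 : Y₂ ω = y₂ <;> simp [h0, h1, h2, h3, Prod.ext_iff] <;> ring

/- Lifting along the projection. -/

lemma pr_lift₁ (z : 𝒵) :
    pr (fun e : Ω × Bool × Bool =>
        p e.1 * (if e.2.1 then q₁ else 1 - q₁) * (if e.2.2 then q₂ else 1 - q₂))
      (fun e => Z e.1) z = pr p Z z := by
  unfold pr
  rw [Fintype.sum_prod_type]
  refine Finset.sum_congr rfl fun ω _ => ?_
  simp only [Fintype.sum_prod_type, Fintype.sum_bool]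
  by_cases h1 : Z ω = z <;> simp [h1] <;> ring

lemma pr_lift₂ (x : 𝒳) (z : 𝒵) :
    pr (fun e : Ω × Bool × Bool =>
        p e.1 * (if e.2.1 then q₁ else 1 - q₁) * (if e.2.2 then q₂ else 1 - q₂))
      (fun e => (X e.1, Z e.1)) (x, z) = pr p (fun ω => (X ω, Z ω)) (x, z) := by
  unfold pr
  rw [Fintype.sum_prod_type]
  refine Finset.sum_congr rfl fun ω _ => ?_
  simp only [Fintype.sum_prod_type, Fintype.sum_bool]
  by_cases h0 : X ω = x <;> by_cases h1 : Z ω = z <;> simp [h0, h1, Prod.ext_iff] <;> ring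

lemma condEntropy_lift :
    condEntropy (fun e : Ω × Bool × Bool =>
        p e.1 * (if e.2.1 then q₁ else 1 - q₁) * (if e.2.2 then q₂ else 1 - q₂))
      (fun e => X e.1) (fun e => Z e.1) = condEntropy p X Z := by
  simp only [condEntropy]
  simp only [pr_lift₂ p q₁ q₂ X Z, pr_lift₁ p q₁ q₂ Z]

lemma condEntropy_ext :
    condEntropy (fun e : Ω × Bool × Bool =>
        p e.1 * (if e.2.1 then q₁ else 1 - q₁) * (if e.2.2 then q₂ else 1 - q₂))
      (fun e => X e.1)
      (fun e => (Z e.1, ((if e.2.1 then some (Y₁ e.1) else none),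
                         (if e.2.2 then some (Y₂ e.1) else none))))
    = (1 - q₁) * (1 - q₂) * condEntropy p X Z
        + q₁ * (1 - q₂) * condEntropy p X (fun ω => (Z ω, Y₁ ω))
        + (1 - q₁) * q₂ * condEntropy p X (fun ω => (Z ω, Y₂ ω))
        + q₁ * q₂ * condEntropy p X (fun ω => (Z ω, Y₁ ω, Y₂ ω)) := by
  simp only [condEntropy]
  simp only [Fintype.sum_prod_type, Fintype.sum_option]
  simp only [prJ_NN p q₁ q₂ X Y₁ Y₂ Z, prJ_BN p q₁ q₂ X Y₁ Y₂ Z,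
    prJ_NC p q₁ q₂ X Y₁ Y₂ Z, prJ_SS p q₁ q₂ X Y₁ Y₂ Z,
    prM_NN p q₁ q₂ Y₁ Y₂ Z, prM_BN p q₁ q₂ Y₁ Y₂ Z,
    prM_NC p q₁ q₂ Y₁ Y₂ Z, prM_SS p q₁ q₂ Y₁ Y₂ Z]
  simp only [scale_log]
  simp only [Finset.sum_add_distrib, ← Finset.mul_sum]
  ring

end Aux

/-- If `Ŷ₁, Ŷ₂` are independent erasure versions of `Y₁, Y₂` with retention
probabilities `q₁, q₂` (erasure indicators independent of everything and of each other), then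
`I(X; Ŷ₁, Ŷ₂ | Z) = q₁(1−q₂)·I(X;Y₁|Z) + (1−q₁)q₂·I(X;Y₂|Z) + q₁q₂·I(X;Y₁,Y₂|Z)`. -/
theorem two_relay_erasure_condMI
    {Ω 𝒳 𝒴₁ 𝒴₂ 𝒵 : Type*} [Fintype Ω] [Fintype 𝒳] [Fintype 𝒴₁] [Fintype 𝒴₂] [Fintype 𝒵]
    [DecidableEq 𝒳] [DecidableEq 𝒴₁] [DecidableEq 𝒴₂] [DecidableEq 𝒵]
    (p : Ω → ℝ) (hp : ∀ ω, 0 ≤ p ω) (hp1 : ∑ ω, p ω = 1)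
    (q₁ q₂ : ℝ) (hq₁0 : 0 ≤ q₁) (hq₁1 : q₁ ≤ 1) (hq₂0 : 0 ≤ q₂) (hq₂1 : q₂ ≤ 1)
    (X : Ω → 𝒳) (Y₁ : Ω → 𝒴₁) (Y₂ : Ω → 𝒴₂) (Z : Ω → 𝒵) :
    condMI (fun e : Ω × Bool × Bool =>
        p e.1 * (if e.2.1 then q₁ else 1 - q₁) * (if e.2.2 then q₂ else 1 - q₂))
        (fun e => X e.1)
        (fun e => ((if e.2.1 then some (Y₁ e.1) else none),
                   (if e.2.2 then some (Y₂ e.1) else none)))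
        (fun e => Z e.1)
      = q₁ * (1 - q₂) * condMI p X Y₁ Z + (1 - q₁) * q₂ * condMI p X Y₂ Z
          + q₁ * q₂ * condMI p X (fun ω => (Y₁ ω, Y₂ ω)) Z := by
  simp only [condMI]
  rw [condEntropy_lift p q₁ q₂ X Z, condEntropy_ext p q₁ q₂ X Y₁ Y₂ Z]
  ring
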